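/- Let n ≥ 1 and let A be a real n×n matrix. Then there exists a permutation π of {1,…,n} such that i (the imaginary unit) is not an eigenvalue of the complexification of A·P_π, i.e. i is not a root of the characteristic polynomial over ℂ of A·P_π. (In particular this applies when i is an eigenvalue of A itself, yielding a column permutation removing the eigenvalue i.) -/

import Mathlib

open Finset Equiv Matrix Polynomial

/-- Sum of signs of permutations fixing `t` pointwise vanishes when at least two
points are outside `t`. -/
lemma aux_sign_sum {n : ℕ} (t : Finset (Fin n)) (h : 2 ≤ (Finset.univ \ t).card) :
    ∑ ρ ∈ Finset.univ.filter (fun ρ : Equiv.Perm (Fin n) => ∀ j ∈ t, ρ j = j),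
      ((Equiv.Perm.sign ρ : ℤ) : ℂ) = 0 := by
  obtain ⟨a, ha, b, hb, hab⟩ := Finset.one_lt_card.mp h
  simp only [Finset.mem_sdiff, Finset.mem_univ, true_and] at ha hb
  apply Finset.sum_involution (g := fun ρ _ => Equiv.swap a b * ρ)
  · intro ρ _
    rw [Equiv.Perm.sign_mul, Equiv.Perm.sign_swap hab]
    push_cast
    ring
  · intro ρ _ hρ
    intro hcon
    have hsw : Equiv.swap a b = 1 := by
      have := mul_right_cancel (b := ρ) (a := Equiv.swap a b) (c := 1) (by simpa using hcon)
      simpa using this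
    exact hab (Equiv.swap_eq_one_iff.mp hsw)
  · intro ρ hρ
    simp only [Finset.mem_filter, Finset.mem_univ, true_and] at hρ ⊢
    intro j hj
    rw [Equiv.Perm.mul_apply, hρ j hj,
      Equiv.swap_apply_of_ne_of_ne (by rintro rfl; exact ha hj) (by rintro rfl; exact hb hj)]
  · intro ρ _
    rw [← mul_assoc, Equiv.swap_mul_self, one_mul]

lemma aux_filter_fix {n : ℕ} (t : Finset (Fin n)) (h : (Finset.univ \ t).card ≤ 1) :
    (Finset.univ.filter (fun ρ : Equiv.Perm (Fin n) => ∀ j ∈ t, ρ j = j))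
      = {1} := by
  ext ρ
  simp only [Finset.mem_filter, Finset.mem_univ, true_and, Finset.mem_singleton]
  constructor
  · intro hρ
    refine Equiv.ext fun j => ?_
    show ρ j = j
    by_cases hj : j ∈ t
    · exact hρ j hj
    · have hj' : j ∈ Finset.univ \ t := by simp [hj]
      have hρj : ρ j ∈ Finset.univ \ t := by
        simp only [Finset.mem_sdiff, Finset.mem_univ, true_and]
        intro hmem
        have h2 : ρ (ρ j) = ρ j := hρ _ hmem
        have : ρ j = j := ρ.injective h2
        exact hj (this ▸ hmem)
      exact Finset.card_le_one.mp h _ hρj _ hj'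
  · rintro rfl j _
    rfl

/-- Key inner identity. -/
lemma aux_inner {n : ℕ} (x : ℂ) (b : Fin n → ℂ) :
    ∑ ρ : Equiv.Perm (Fin n), ((Equiv.Perm.sign ρ : ℤ) : ℂ) *
        ∏ j, (b j - x * (if ρ j = j then 1 else 0))
      = (-x) ^ n + (-x) ^ (n - 1) * ∑ j, b j := by
  have key : ∀ ρ : Equiv.Perm (Fin n),
      (∏ j, (b j - x * (if ρ j = j then 1 else 0)))
        = ∑ t ∈ (Finset.univ : Finset (Fin n)).powerset,
            (if ∀ j ∈ t, ρ j = j then (-x) ^ t.card else 0) *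
              ∏ j ∈ Finset.univ \ t, b j := by
    intro ρ
    have h1 : ∀ j ∈ (Finset.univ : Finset (Fin n)),
        b j - x * (if ρ j = j then 1 else 0)
          = (if ρ j = j then -x else 0) + b j := by
      intro j _; split <;> ring
    rw [Finset.prod_congr rfl h1, Finset.prod_add]
    refine Finset.sum_congr rfl fun t _ => ?_
    congr 1
    by_cases h : ∀ j ∈ t, ρ j = j
    · rw [if_pos h, Finset.prod_congr rfl (fun j hj => if_pos (h j hj)),
        Finset.prod_const]
    · rw [if_neg h]
      push_neg at h
      obtain ⟨j, hj, hj'⟩ := h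
      exact Finset.prod_eq_zero hj (if_neg hj')
  calc ∑ ρ : Equiv.Perm (Fin n), ((Equiv.Perm.sign ρ : ℤ) : ℂ) *
        ∏ j, (b j - x * (if ρ j = j then 1 else 0))
      = ∑ ρ : Equiv.Perm (Fin n), ∑ t ∈ (Finset.univ : Finset (Fin n)).powerset,
          (if ∀ j ∈ t, ρ j = j then ((Equiv.Perm.sign ρ : ℤ) : ℂ) else 0) *
            ((-x) ^ t.card * ∏ j ∈ Finset.univ \ t, b j) := by
        refine Finset.sum_congr rfl fun ρ _ => ?_
        rw [key ρ, Finset.mul_sum]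
        refine Finset.sum_congr rfl fun t _ => ?_
        split <;> ring
    _ = ∑ t ∈ (Finset.univ : Finset (Fin n)).powerset,
          (∑ ρ ∈ Finset.univ.filter (fun ρ : Equiv.Perm (Fin n) => ∀ j ∈ t, ρ j = j),
            ((Equiv.Perm.sign ρ : ℤ) : ℂ)) *
            ((-x) ^ t.card * ∏ j ∈ Finset.univ \ t, b j) := by
        rw [Finset.sum_comm]
        refine Finset.sum_congr rfl fun t _ => ?_
        rw [Finset.sum_mul, Finset.sum_filter]
        refine Finset.sum_congr rfl fun ρ _ => ?_
        split <;> simp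
    _ = ∑ t ∈ (Finset.univ : Finset (Fin n)).powerset,
          ((if t = Finset.univ then (-x) ^ n else 0)
            + ∑ j, (if Finset.univ.erase j = t then (-x) ^ (n - 1) * b j else 0)) := by
        refine Finset.sum_congr rfl fun t ht => ?_
        rcases lt_or_ge ((Finset.univ \ t).card) 2 with hc | hc
        · -- card ≤ 1 : the filter is {1}
          rw [aux_filter_fix t (by omega), Finset.sum_singleton]
          simp only [_root_.map_one, Units.val_one, Int.cast_one, one_mul]
          -- now case on whether t = univ or t = erase j
          interval_cases hcard : (Finset.univ \ t).card
          · -- card 0 : t = univ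
            have ht2 : t = Finset.univ := by
              have hempty := Finset.card_eq_zero.mp hcard
              have hsub : (Finset.univ : Finset (Fin n)) ⊆ t :=
                Finset.sdiff_eq_empty_iff_subset.mp hempty
              exact Finset.univ_subset_iff.mp hsub
            subst ht2
            rw [if_pos rfl]
            have hcn : (Finset.univ : Finset (Fin n)).card = n := by simp
            rw [hcn, Finset.sdiff_self]
            simp only [Finset.prod_empty, mul_one]
            have : ∀ j : Fin n, ¬ (Finset.univ.erase j = Finset.univ) := by
              intro j hj
              have h2 : j ∈ Finset.univ.erase j := by rw [hj]; exact Finset.mem_univ j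
              exact (Finset.notMem_erase j _) h2
            rw [Finset.sum_congr rfl (fun j _ => if_neg (this j))]
            simp
          · -- card 1 : t = univ.erase a
            obtain ⟨a, hA⟩ := Finset.card_eq_one.mp hcard
            have ht2 : t = Finset.univ.erase a := by
              ext j
              simp only [Finset.mem_erase, Finset.mem_univ, and_true]
              constructor
              · intro hj hja
                subst hja
                have hmem : j ∈ Finset.univ \ t := by
                  rw [hA]; exact Finset.mem_singleton_self j
                simp only [Finset.mem_sdiff] at hmem
                exact hmem.2 hj
              · intro hja
                by_contra hjt
                have hmem : j ∈ Finset.univ \ t := by simp [hjt]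
                rw [hA, Finset.mem_singleton] at hmem
                exact hja hmem
            subst ht2
            have htne : (Finset.univ.erase a : Finset (Fin n)) ≠ Finset.univ := by
              intro hj
              have h2 : a ∈ Finset.univ.erase a := by rw [hj]; exact Finset.mem_univ a
              exact (Finset.notMem_erase a _) h2
            rw [if_neg htne, zero_add]
            have hcard2 : (Finset.univ.erase a : Finset (Fin n)).card = n - 1 := by
              rw [Finset.card_erase_of_mem (Finset.mem_univ a)]
              simp
            have hdiff : Finset.univ \ Finset.univ.erase a = {a} := hA
            rw [hcard2, hdiff, Finset.prod_singleton]
            have huniq : ∀ j : Fin n, Finset.univ.erase j = Finset.univ.erase a → j = a := by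
              intro j hj
              by_contra hja
              have haj : a ∈ Finset.univ.erase j := by
                rw [Finset.mem_erase]
                exact ⟨fun h => hja h.symm, Finset.mem_univ a⟩
              rw [hj] at haj
              exact (Finset.notMem_erase a _) haj
            rw [Finset.sum_eq_single a]
            · rw [if_pos rfl]
            · intro j _ hja
              rw [if_neg]
              intro hj
              exact hja (huniq j hj)
            · intro hA2
              exact absurd (Finset.mem_univ a) hA2
        · -- card ≥ 2 : sign sum is zero, and both if's are zero
          rw [aux_sign_sum t hc, zero_mul]
          have h1 : t ≠ Finset.univ := by
            intro hj
            subst hj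
            simp at hc
          have h2 : ∀ j : Fin n, ¬ (Finset.univ.erase j = t) := by
            intro j hj
            have : (Finset.univ \ t).card = 1 := by
              rw [← hj]
              rw [Finset.sdiff_erase_self (Finset.mem_univ j), Finset.card_singleton]
            omega
          rw [if_neg h1, Finset.sum_congr rfl (fun j _ => if_neg (h2 j))]
          simp
    _ = (-x) ^ n + (-x) ^ (n - 1) * ∑ j, b j := by
        rw [Finset.sum_add_distrib]
        congr 1
        · rw [Finset.sum_ite_eq' (Finset.univ : Finset (Fin n)).powerset Finset.univ
            (fun _ => (-x) ^ n)]
          simp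
        · rw [Finset.sum_comm, Finset.mul_sum]
          refine Finset.sum_congr rfl fun j _ => ?_
          rw [Finset.sum_ite_eq (Finset.univ : Finset (Fin n)).powerset (Finset.univ.erase j)
            (fun _ => (-x) ^ (n - 1) * b j)]
          simp


/-- The key identity: the sign-weighted sum of `det (B - I • P_σ)` over all permutations. -/
lemma aux_main {n : ℕ} (B : Matrix (Fin n) (Fin n) ℂ) :
    ∑ σ : Equiv.Perm (Fin n), ((Equiv.Perm.sign σ : ℤ) : ℂ) *
        (B - Complex.I • σ.permMatrix ℂ).det
      = ((Nat.factorial n : ℕ) : ℂ) * (-Complex.I) ^ n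
        + (-Complex.I) ^ (n - 1) * ∑ τ : Equiv.Perm (Fin n), ∑ j, B (τ j) j := by
  have hdet : ∀ σ : Equiv.Perm (Fin n), (B - Complex.I • σ.permMatrix ℂ).det
      = ∑ τ : Equiv.Perm (Fin n), ((Equiv.Perm.sign τ : ℤ) : ℂ) *
          ∏ j, (B (τ j) j - Complex.I * (if σ (τ j) = j then 1 else 0)) := by
    intro σ
    rw [Matrix.det_apply']
    refine Finset.sum_congr rfl fun τ _ => ?_
    congr 1
    refine Finset.prod_congr rfl fun j _ => ?_
    simp [Equiv.toPEquiv_apply, PEquiv.toMatrix_apply, Option.mem_def]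
  calc ∑ σ : Equiv.Perm (Fin n), ((Equiv.Perm.sign σ : ℤ) : ℂ) *
        (B - Complex.I • σ.permMatrix ℂ).det
      = ∑ σ : Equiv.Perm (Fin n), ((Equiv.Perm.sign σ⁻¹ : ℤ) : ℂ) *
          (B - Complex.I • (σ⁻¹).permMatrix ℂ).det :=
        (Equiv.sum_comp (Equiv.inv (Equiv.Perm (Fin n)))
          (fun σ => ((Equiv.Perm.sign σ : ℤ) : ℂ) *
            (B - Complex.I • σ.permMatrix ℂ).det)).symm
    _ = ∑ σ : Equiv.Perm (Fin n), ∑ τ : Equiv.Perm (Fin n),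
          ((Equiv.Perm.sign σ : ℤ) : ℂ) * (((Equiv.Perm.sign τ : ℤ) : ℂ) *
            ∏ j, (B (τ j) j - Complex.I * (if τ j = σ j then 1 else 0))) := by
        refine Finset.sum_congr rfl fun σ _ => ?_
        rw [hdet, Finset.mul_sum, Equiv.Perm.sign_inv]
        refine Finset.sum_congr rfl fun τ _ => ?_
        congr 2
        refine Finset.prod_congr rfl fun j _ => ?_
        congr 1
        simp [Equiv.Perm.inv_eq_iff_eq, Equiv.symm_apply_eq]
    _ = ∑ τ : Equiv.Perm (Fin n), ∑ σ : Equiv.Perm (Fin n),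
          ((Equiv.Perm.sign σ : ℤ) : ℂ) * (((Equiv.Perm.sign τ : ℤ) : ℂ) *
            ∏ j, (B (τ j) j - Complex.I * (if τ j = σ j then 1 else 0))) :=
        Finset.sum_comm
    _ = ∑ τ : Equiv.Perm (Fin n), ∑ ρ : Equiv.Perm (Fin n),
          ((Equiv.Perm.sign ρ : ℤ) : ℂ) *
            ∏ j, (B (τ j) j - Complex.I * (if ρ j = j then 1 else 0)) := by
        refine Finset.sum_congr rfl fun τ _ => ?_
        rw [← Equiv.sum_comp (Equiv.mulLeft τ)
          (fun σ => ((Equiv.Perm.sign σ : ℤ) : ℂ) * (((Equiv.Perm.sign τ : ℤ) : ℂ) *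
            ∏ j, (B (τ j) j - Complex.I * (if τ j = σ j then 1 else 0))))]
        refine Finset.sum_congr rfl fun ρ _ => ?_
        have hsq : ((Equiv.Perm.sign τ : ℤ) : ℂ) * ((Equiv.Perm.sign τ : ℤ) : ℂ) = 1 := by
          rcases Int.units_eq_one_or (Equiv.Perm.sign τ) with h | h <;> rw [h] <;> norm_num
        have hprod : ∀ j : Fin n,
            (B (τ j) j - Complex.I * (if τ j = (Equiv.mulLeft τ ρ) j then 1 else 0))
              = B (τ j) j - Complex.I * (if ρ j = j then 1 else 0) := by
          intro j
          have hiff : (τ j = (Equiv.mulLeft τ ρ) j) ↔ (ρ j = j) := by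
            show τ j = τ (ρ j) ↔ ρ j = j
            rw [Equiv.apply_eq_iff_eq]
            exact eq_comm
          rw [if_congr hiff rfl rfl]
        rw [Finset.prod_congr rfl fun j _ => hprod j]
        have hsgn : ((Equiv.Perm.sign (Equiv.mulLeft τ ρ) : ℤ) : ℂ)
            = ((Equiv.Perm.sign τ : ℤ) : ℂ) * ((Equiv.Perm.sign ρ : ℤ) : ℂ) := by
          show ((Equiv.Perm.sign (τ * ρ) : ℤ) : ℂ) = _
          rw [Equiv.Perm.sign_mul]
          push_cast
          ring
        rw [hsgn]
        calc ((Equiv.Perm.sign τ : ℤ) : ℂ) * ((Equiv.Perm.sign ρ : ℤ) : ℂ) *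
              (((Equiv.Perm.sign τ : ℤ) : ℂ) *
                ∏ j, (B (τ j) j - Complex.I * (if ρ j = j then 1 else 0)))
            = (((Equiv.Perm.sign τ : ℤ) : ℂ) * ((Equiv.Perm.sign τ : ℤ) : ℂ)) *
              (((Equiv.Perm.sign ρ : ℤ) : ℂ) *
                ∏ j, (B (τ j) j - Complex.I * (if ρ j = j then 1 else 0))) := by ring
          _ = _ := by rw [hsq, one_mul]
    _ = ∑ τ : Equiv.Perm (Fin n),
          ((-Complex.I) ^ n + (-Complex.I) ^ (n - 1) * ∑ j, B (τ j) j) :=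
        Finset.sum_congr rfl fun τ _ => aux_inner Complex.I (fun j => B (τ j) j)
    _ = ((Nat.factorial n : ℕ) : ℂ) * (-Complex.I) ^ n
        + (-Complex.I) ^ (n - 1) * ∑ τ : Equiv.Perm (Fin n), ∑ j, B (τ j) j := by
        rw [Finset.sum_add_distrib, Finset.sum_const, ← Finset.mul_sum]
        congr 1
        simp [Fintype.card_perm, mul_comm]

theorem stmt13 (n : ℕ) (hn : 1 ≤ n) (A : Matrix (Fin n) (Fin n) ℝ) :
    ∃ π : Equiv.Perm (Fin n),
      ¬ (((A * π.permMatrix ℝ).map (algebraMap ℝ ℂ)).charpoly).IsRoot Complex.I := by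
  by_contra hcon
  push_neg at hcon
  set B : Matrix (Fin n) (Fin n) ℂ := A.map (algebraMap ℝ ℂ) with hB
  -- the complexification is compatible with multiplication by permutation matrices
  have hmap : ∀ π : Equiv.Perm (Fin n),
      (A * π.permMatrix ℝ).map (algebraMap ℝ ℂ) = B * π.permMatrix ℂ := by
    intro π
    rw [Matrix.map_mul]
    congr 1
    ext p q
    simp only [Matrix.map_apply, PEquiv.toMatrix_apply, Equiv.toPEquiv_apply, Option.mem_def]
    by_cases hpq : π p = q <;> simp [hpq]
  -- root of charpoly gives vanishing determinant
  have hcharroot : ∀ M : Matrix (Fin n) (Fin n) ℂ, M.charpoly.IsRoot Complex.I →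
      (Complex.I • (1 : Matrix (Fin n) (Fin n) ℂ) - M).det = 0 := by
    intro M hroot
    have h0 : ((charmatrix M).map (Polynomial.evalRingHom Complex.I)).det = 0 := by
      calc ((charmatrix M).map (Polynomial.evalRingHom Complex.I)).det
          = (Polynomial.evalRingHom Complex.I) (charmatrix M).det :=
            (RingHom.map_det (Polynomial.evalRingHom Complex.I) (charmatrix M)).symm
        _ = 0 := hroot
    have heq : (charmatrix M).map (Polynomial.evalRingHom Complex.I)
        = Complex.I • (1 : Matrix (Fin n) (Fin n) ℂ) - M := by
      ext i j
      simp [charmatrix_apply, Matrix.map_apply, Matrix.one_apply, Matrix.diagonal_apply,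
        mul_ite, Matrix.sub_apply, Matrix.smul_apply, smul_eq_mul,
        apply_ite (Polynomial.eval Complex.I)]
    rwa [heq] at h0
  -- hence all the sign-weighted determinants vanish
  have hzero : ∀ σ : Equiv.Perm (Fin n), (B - Complex.I • σ.permMatrix ℂ).det = 0 := by
    intro σ
    have h0 := hcharroot _ (hcon σ⁻¹)
    rw [hmap] at h0
    have hPP : (σ.permMatrix ℂ) * ((σ⁻¹).permMatrix ℂ) = 1 := by
      show (σ.toPEquiv.toMatrix : Matrix (Fin n) (Fin n) ℂ) * (σ⁻¹).toPEquiv.toMatrix = 1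
      rw [← PEquiv.toMatrix_trans, ← Equiv.toPEquiv_trans,
        show σ.trans σ⁻¹ = (1 : Equiv.Perm (Fin n)) from Equiv.self_trans_symm σ,
        show (1 : Equiv.Perm (Fin n)) = Equiv.refl (Fin n) from rfl,
        Equiv.toPEquiv_refl, PEquiv.toMatrix_refl]
    have hfact : (B - Complex.I • σ.permMatrix ℂ) * ((σ⁻¹).permMatrix ℂ)
        = -(Complex.I • (1 : Matrix (Fin n) (Fin n) ℂ) - B * (σ⁻¹).permMatrix ℂ) := by
      rw [Matrix.sub_mul, Matrix.smul_mul, hPP, neg_sub]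
    have hdet2 := congrArg Matrix.det hfact
    rw [Matrix.det_mul, Matrix.det_neg, h0, mul_zero, Matrix.det_permutation] at hdet2
    have hsgn : (((Equiv.Perm.sign σ⁻¹ : ℤˣ) : ℂ)) ≠ 0 := by
      rcases Int.units_eq_one_or (Equiv.Perm.sign σ⁻¹) with h | h <;> rw [h] <;> norm_num
    exact (mul_eq_zero.mp hdet2).resolve_right hsgn
  -- so the sign-weighted sum is zero, contradicting aux_main
  have hsum := aux_main B
  rw [Finset.sum_congr rfl (fun σ _ => by rw [hzero σ, mul_zero])] at hsum
  rw [Finset.sum_const_zero] at hsum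
  -- the double sum of entries is real
  have hr : (∑ τ : Equiv.Perm (Fin n), ∑ j, B (τ j) j)
      = ((∑ τ : Equiv.Perm (Fin n), ∑ j, A (τ j) j : ℝ) : ℂ) := by
    rw [Complex.ofReal_sum]
    refine Finset.sum_congr rfl fun τ _ => ?_
    rw [Complex.ofReal_sum]
    refine Finset.sum_congr rfl fun j _ => ?_
    simp [hB, Matrix.map_apply]
  rw [hr] at hsum
  set s : ℝ := ∑ τ : Equiv.Perm (Fin n), ∑ j, A (τ j) j with hs
  obtain ⟨m, rfl⟩ : ∃ m, n = m + 1 := ⟨n - 1, (Nat.succ_pred_eq_of_pos hn).symm⟩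
  rw [show m + 1 - 1 = m from rfl, pow_succ] at hsum
  have hfac : (0 : ℂ) = (-Complex.I) ^ m * (((Nat.factorial (m + 1) : ℕ) : ℂ) * (-Complex.I) + (s : ℂ)) := by
    rw [hsum]; ring
  have hne : ((-Complex.I) ^ m : ℂ) ≠ 0 :=
    pow_ne_zero m (neg_ne_zero.mpr Complex.I_ne_zero)
  have hkey : (((Nat.factorial (m + 1) : ℕ) : ℂ) * (-Complex.I) + (s : ℂ)) = 0 :=
    ((mul_eq_zero.mp hfac.symm).resolve_left hne)
  have him := congrArg Complex.im hkey
  simp [Complex.add_im, Complex.mul_im] at him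
  exact Nat.factorial_ne_zero (m + 1) (by exact_mod_cast him)
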